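/- For X sufficiently large and any H ≥ 1, the sum over pairs of integers (n₁, n₂) with X/2 < n₁, n₂ ≤ X and |n₁·log n₁ − n₂·log n₂| > H of 1/|n₁·log n₁ − n₂·log n₂| is O((X/log X)·log X) = O(X). -/

import Mathlib

open Finset

private lemma harm_bound (N : ℕ) : ∑ d ∈ Icc 1 N, (d : ℝ)⁻¹ ≤ 1 + Real.log N := by
  have := harmonic_le_one_add_log N
  rwa [harmonic_eq_sum_Icc, show ((∑ d ∈ Icc 1 N, (d:ℚ)⁻¹ : ℚ) : ℝ)
      = ∑ d ∈ Icc 1 N, (d : ℝ)⁻¹ by push_cast; rfl] at this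

private lemma inner_bound (a N : ℕ) (ha : a ∈ Icc 1 N) :
    ∑ b ∈ Icc 1 N, (if a = b then 0 else |(a : ℝ) - b|⁻¹) ≤ 2 * (1 + Real.log N) := by
  have key : ∀ s : Finset ℕ, s ⊆ Icc 1 N → ∀ φ : ℕ → ℕ, Set.InjOn φ s →
      (∀ b ∈ s, φ b ∈ Icc 1 N) → (∀ b ∈ s, |(a : ℝ) - b| = (φ b : ℝ)) →
      ∑ b ∈ s, |(a : ℝ) - b|⁻¹ ≤ 1 + Real.log N := by
    intro s hs φ hφ hmem habs
    calc ∑ b ∈ s, |(a : ℝ) - b|⁻¹ = ∑ b ∈ s, ((φ b : ℝ))⁻¹ := by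
          exact Finset.sum_congr rfl fun b hb => by rw [habs b hb]
      _ = ∑ d ∈ s.image φ, (d : ℝ)⁻¹ :=
          (Finset.sum_image (f := fun d : ℕ => (d : ℝ)⁻¹) (g := φ) (fun x hx y hy h => hφ hx hy h)).symm
      _ ≤ ∑ d ∈ Icc 1 N, (d : ℝ)⁻¹ := by
          apply Finset.sum_le_sum_of_subset_of_nonneg
          · intro d hd
            obtain ⟨b, hb, rfl⟩ := Finset.mem_image.mp hd
            exact hmem b hb
          · intro d _ _; positivity
      _ ≤ 1 + Real.log N := harm_bound N
  have hsplit : ∑ b ∈ Icc 1 N, (if a = b then 0 else |(a : ℝ) - b|⁻¹)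
      = ∑ b ∈ (Icc 1 N).filter (· < a), |(a : ℝ) - b|⁻¹
        + ∑ b ∈ (Icc 1 N).filter (a < ·), |(a : ℝ) - b|⁻¹ := by
    rw [← Finset.sum_filter_add_sum_filter_not (Icc 1 N) (fun b => b < a)]
    congr 1
    · apply Finset.sum_congr rfl
      intro b hb
      rw [if_neg (by exact fun h => absurd (Finset.mem_filter.mp hb).2 (by omega))]
    · rw [← Finset.sum_filter_add_sum_filter_not ((Icc 1 N).filter (fun b => ¬ b < a))
        (fun b => a = b)]
      have h0 : ∑ b ∈ ((Icc 1 N).filter (fun b => ¬ b < a)).filter (fun b => a = b),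
          (if a = b then (0:ℝ) else |(a : ℝ) - b|⁻¹) = 0 := by
        apply Finset.sum_eq_zero; intro b hb
        rw [if_pos (Finset.mem_filter.mp hb).2]
      rw [h0, zero_add]
      rw [Finset.filter_filter]
      have : (Icc 1 N).filter (fun b => ¬ b < a ∧ ¬ a = b) = (Icc 1 N).filter (a < ·) := by
        apply Finset.filter_congr; intro b _; simp; omega
      rw [this]
      apply Finset.sum_congr rfl
      intro b hb
      rw [if_neg (by exact fun h => absurd (Finset.mem_filter.mp hb).2 (by omega))]
  rw [hsplit]
  have haN := Finset.mem_Icc.mp ha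
  have h1 : ∑ b ∈ (Icc 1 N).filter (· < a), |(a : ℝ) - b|⁻¹ ≤ 1 + Real.log N := by
    apply key _ (Finset.filter_subset _ _) (fun b => a - b)
    · intro x hx y hy h
      have h' : a - x = a - y := h
      simp only [Finset.coe_filter, Set.mem_setOf_eq, Finset.mem_Icc] at hx hy
      omega
    · intro b hb
      simp only [Finset.mem_filter, Finset.mem_Icc] at hb
      show a - b ∈ Icc 1 N
      exact Finset.mem_Icc.mpr ⟨by omega, by omega⟩
    · intro b hb
      simp only [Finset.mem_filter, Finset.mem_Icc] at hb
      rw [abs_of_pos (sub_pos.mpr (Nat.cast_lt.mpr hb.2) : (0:ℝ) < (a:ℝ) - b)]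
      push_cast [Nat.cast_sub (by omega : b ≤ a)]; ring
  have h2 : ∑ b ∈ (Icc 1 N).filter (a < ·), |(a : ℝ) - b|⁻¹ ≤ 1 + Real.log N := by
    apply key _ (Finset.filter_subset _ _) (fun b => b - a)
    · intro x hx y hy h
      have h' : x - a = y - a := h
      simp only [Finset.coe_filter, Set.mem_setOf_eq, Finset.mem_Icc] at hx hy
      omega
    · intro b hb
      simp only [Finset.mem_filter, Finset.mem_Icc] at hb
      show b - a ∈ Icc 1 N
      exact Finset.mem_Icc.mpr ⟨by omega, by omega⟩
    · intro b hb
      simp only [Finset.mem_filter, Finset.mem_Icc] at hb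
      rw [abs_of_neg (sub_neg.mpr (Nat.cast_lt.mpr hb.2) : (a:ℝ) - b < 0)]
      push_cast [Nat.cast_sub (by omega : a ≤ b)]; ring
  linarith

private lemma gap_bound {X : ℝ} (hX : 4 ≤ X) {a b : ℕ} (ha : X / 2 < a) (hb : X / 2 < b)
    (hne : a ≠ b) :
    |(a : ℝ) - b| * Real.log (X / 2) ≤ |(a : ℝ) * Real.log a - b * Real.log b| := by
  have hX2 : (2 : ℝ) ≤ X / 2 := by linarith
  have main : ∀ a b : ℕ, X / 2 < (a:ℝ) → X / 2 < (b:ℝ) → b < a →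
      ((a : ℝ) - b) * Real.log (X / 2) ≤ (a : ℝ) * Real.log a - b * Real.log b := by
    intro a b ha hb hlt
    have hbpos : (0 : ℝ) < b := by linarith
    have hlog1 : Real.log (X / 2) ≤ Real.log b := Real.log_le_log (by linarith) (le_of_lt hb)
    have hlog2 : Real.log b ≤ Real.log a := Real.log_le_log hbpos (by exact_mod_cast hlt.le)
    have hab : (b : ℝ) ≤ a := by exact_mod_cast hlt.le
    nlinarith [Real.log_nonneg (by linarith : (1:ℝ) ≤ X / 2)]
  rcases lt_or_gt_of_ne hne with h | h
  · have := main b a hb ha h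
    have hcast : (a:ℝ) < b := by exact_mod_cast h
    rw [abs_sub_comm, abs_of_pos (by linarith : (0:ℝ) < (b:ℝ) - a), abs_sub_comm]
    calc ((b:ℝ) - a) * Real.log (X/2) ≤ (b:ℝ) * Real.log b - a * Real.log a := this
      _ ≤ |(b:ℝ) * Real.log b - a * Real.log a| := le_abs_self _
  · have := main a b ha hb h
    have hcast : (b:ℝ) < a := by exact_mod_cast h
    rw [abs_of_pos (by linarith : (0:ℝ) < (a:ℝ) - b)]
    calc ((a:ℝ) - b) * Real.log (X/2) ≤ (a:ℝ) * Real.log a - b * Real.log b := this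
      _ ≤ |(a:ℝ) * Real.log a - b * Real.log b| := le_abs_self _

theorem stmt5 :
    ∃ C : ℝ, 0 < C ∧ ∃ X₀ : ℝ, ∀ X : ℝ, X ≥ X₀ → ∀ H : ℝ, 1 ≤ H →
      ∑ p ∈ (Finset.Icc 1 ⌊X⌋₊ ×ˢ Finset.Icc 1 ⌊X⌋₊).filter (fun p : ℕ × ℕ =>
          X / 2 < (p.1 : ℝ) ∧ X / 2 < (p.2 : ℝ) ∧
          H < |(p.1 : ℝ) * Real.log p.1 - (p.2 : ℝ) * Real.log p.2|),
        1 / |(p.1 : ℝ) * Real.log p.1 - (p.2 : ℝ) * Real.log p.2|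
      ≤ C * X := by
  refine ⟨8, by norm_num, 4, fun X hX H hH => ?_⟩
  set N := ⌊X⌋₊ with hN
  set L := Real.log (X / 2) with hL
  have hXpos : (0 : ℝ) < X := by linarith
  have hLpos : 0 < L := Real.log_pos (by linarith)
  have hlogX : Real.log 4 ≤ Real.log X := Real.log_le_log (by norm_num) hX
  have hlog4 : (1 : ℝ) < Real.log 4 := by
    have : Real.exp 1 < 4 := by
      have := Real.exp_one_lt_d9; linarith
    calc (1:ℝ) = Real.log (Real.exp 1) := (Real.log_exp 1).symm
      _ < Real.log 4 := Real.log_lt_log (Real.exp_pos 1) this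
  have hLX : Real.log X / 2 ≤ L := by
    rw [hL, Real.log_div (by linarith) (by norm_num)]
    have h2 : Real.log 2 = Real.log 4 / 2 := by
      rw [show (4:ℝ) = 2^2 by norm_num, Real.log_pow]; push_cast; ring
    linarith
  set g : ℕ × ℕ → ℝ := fun p =>
    L⁻¹ * (if p.1 = p.2 then 0 else |(p.1 : ℝ) - p.2|⁻¹) with hg
  have hgnonneg : ∀ p : ℕ × ℕ, 0 ≤ g p := by
    intro p; rw [hg]; dsimp only; split <;> positivity
  set S := (Finset.Icc 1 N ×ˢ Finset.Icc 1 N).filter (fun p : ℕ × ℕ =>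
      X / 2 < (p.1 : ℝ) ∧ X / 2 < (p.2 : ℝ) ∧
      H < |(p.1 : ℝ) * Real.log p.1 - (p.2 : ℝ) * Real.log p.2|) with hS
  have step1 : ∑ p ∈ S, 1 / |(p.1 : ℝ) * Real.log p.1 - (p.2 : ℝ) * Real.log p.2|
      ≤ ∑ p ∈ S, g p := by
    apply Finset.sum_le_sum
    intro p hp
    obtain ⟨hp1, hp2, hp3⟩ := (Finset.mem_filter.mp hp).2
    have hne : p.1 ≠ p.2 := by
      intro h
      rw [h] at hp3
      simp at hp3
      linarith
    have hgap := gap_bound hX hp1 hp2 hne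
    have hdpos : (0 : ℝ) < |(p.1 : ℝ) - p.2| := by
      rw [abs_pos]
      intro h
      exact hne (by exact_mod_cast sub_eq_zero.mp h)
    rw [hg]; dsimp only; rw [if_neg hne, one_div]
    rw [← mul_inv]
    apply inv_anti₀ (by positivity)
    calc L * |(p.1 : ℝ) - p.2| = |(p.1 : ℝ) - p.2| * L := mul_comm _ _
      _ ≤ _ := hgap
  have step2 : ∑ p ∈ S, g p ≤ ∑ p ∈ Finset.Icc 1 N ×ˢ Finset.Icc 1 N, g p :=
    Finset.sum_le_sum_of_subset_of_nonneg (Finset.filter_subset _ _)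
      (fun p _ _ => hgnonneg p)
  have step3 : ∑ p ∈ Finset.Icc 1 N ×ˢ Finset.Icc 1 N, g p
      ≤ N * (L⁻¹ * (2 * (1 + Real.log N))) := by
    rw [Finset.sum_product]
    calc ∑ a ∈ Finset.Icc 1 N, ∑ b ∈ Finset.Icc 1 N, g (a, b)
        ≤ ∑ a ∈ Finset.Icc 1 N, L⁻¹ * (2 * (1 + Real.log N)) := by
          apply Finset.sum_le_sum
          intro a ha
          rw [hg]; dsimp only
          rw [← Finset.mul_sum]
          apply mul_le_mul_of_nonneg_left (inner_bound a N ha) (by positivity)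
      _ ≤ N * (L⁻¹ * (2 * (1 + Real.log N))) := by
          rw [Finset.sum_const, nsmul_eq_mul]
          apply mul_le_mul_of_nonneg_right
          · have : (Finset.Icc 1 N).card = N := by rw [Nat.card_Icc]; omega
            rw [this]
          · positivity
  have hNX : (N : ℝ) ≤ X := Nat.floor_le (le_of_lt hXpos)
  have hN4 : 4 ≤ N := Nat.le_floor (by exact_mod_cast hX)
  have hlogN : Real.log N ≤ Real.log X := Real.log_le_log (by exact_mod_cast Nat.pos_of_ne_zero (by omega)) hNX
  have hlogNnn : (0:ℝ) ≤ Real.log N := Real.log_nonneg (by exact_mod_cast Nat.one_le_iff_ne_zero.mpr (by omega))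
  have final : (N : ℝ) * (L⁻¹ * (2 * (1 + Real.log N))) ≤ 8 * X := by
    have h1 : 1 + Real.log N ≤ 2 * Real.log X := by linarith
    have hLX' : L⁻¹ ≤ 2 / Real.log X := by
      have h := inv_anti₀ (by linarith : (0:ℝ) < Real.log X / 2) hLX
      rwa [inv_div] at h
    have hlogXpos : 0 < Real.log X := by linarith
    calc (N : ℝ) * (L⁻¹ * (2 * (1 + Real.log N)))
        ≤ X * ((2 / Real.log X) * (2 * (2 * Real.log X))) := by
          apply mul_le_mul hNX _ (by positivity) (le_of_lt hXpos)
          apply mul_le_mul hLX' (by linarith) (by positivity) (by positivity)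
      _ = 8 * X := by field_simp; ring
  linarith
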